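/- If F ⊑ G and F ⊆ H ⊑* G, then F ⊑ H. -/

import Mathlib

open scoped Classical

/-- A combinatorial pregeometry (matroid) on the ground type `α`, given by a
dimension (rank) function on finite subsets. -/
structure Pregeometry (α : Type*) [DecidableEq α] where
  dim : Finset α → ℕ
  dim_empty : dim ∅ = 0
  dim_le_insert : ∀ (A : Finset α) (x : α), dim A ≤ dim (insert x A)
  insert_le_dim : ∀ (A : Finset α) (x : α), dim (insert x A) ≤ dim A + 1
  submodular : ∀ A B : Finset α, dim (A ∪ B) + dim (A ∩ B) ≤ dim A + dim B

namespace Pregeometry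

variable {α : Type*} [DecidableEq α] (G : Pregeometry α)

/-- Closure of an arbitrary subset. -/
def cl (Y : Set α) : Set α :=
  {x | ∃ A : Finset α, ↑A ⊆ Y ∧ G.dim (insert x A) = G.dim A}

/-- `Y` is closed (in the ambient pregeometry `G`). -/
def IsClosed (Y : Set α) : Prop := G.cl Y = Y

/-- `X` is a closed set of the subpregeometry of `G` induced on `P`
(whose closure operator is `Y ↦ cl Y ∩ P`). -/
def IsClosedIn (P X : Set α) : Prop := X ⊆ P ∧ G.cl X ∩ P = X

/-- Dimension of an arbitrary subset, with value `⊤` when infinite-dimensional. -/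
noncomputable def edim (Y : Set α) : ℕ∞ :=
  ⨆ (A : Finset α) (_ : ↑A ⊆ Y), (G.dim A : ℕ∞)

/-- The (natural number) dimension of a finite-dimensional subset. -/
noncomputable def sdim (Y : Set α) : ℕ := (G.edim Y).toNat

/-- The alternating inclusion–exclusion sum
`Δ_G(Σ) = Σ_{∅ ≠ S ⊆ Σ} (-1)^{|S|+1} d(⋂ S)` of a finite collection of sets. -/
noncomputable def flatSum (Sig : Finset (Set α)) : ℤ :=
  ∑ S ∈ Sig.powerset.filter (· ≠ ∅),
    (-1) ^ (S.card + 1) * (G.sdim (⋂₀ ↑S) : ℤ)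

/-- `P ⊑* Q`: for the subpregeometries induced on `P ⊆ Q`, the dimension of the
intersection of two closed sets of `P` equals the dimension of the intersection
of their closures in `Q` (the closure of `X` in `Q` being `cl X ∩ Q`). -/
def SqStar (P Q : Set α) : Prop := P ⊆ Q ∧
  ∀ X₁ X₂ : Set α, G.IsClosedIn P X₁ → G.IsClosedIn P X₂ →
    G.edim (X₁ ∩ X₂) = G.edim (G.cl X₁ ∩ G.cl X₂ ∩ Q)

/-- `P ⊑ Q`: `P` is strongly embedded in `Q`: for every finite collection `Σ` of
finite-dimensional closed sets of `Q`, `Δ_P(Σ_P) ≤ Δ_Q(Σ)` where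
`Σ_P = {E ∩ P : E ∈ Σ}`. -/
def Sq (P Q : Set α) : Prop := P ⊆ Q ∧
  ∀ Sig : Finset (Set α), (∀ E ∈ Sig, G.IsClosedIn Q E) →
    (∀ E ∈ Sig, G.edim E ≠ ⊤) →
    G.flatSum (Sig.image (· ∩ P)) ≤ G.flatSum Sig

/-- The subpregeometry induced on `P` is flat: every finite collection of
finite-dimensional closed sets satisfies `d(⋃ Σ) ≤ Δ(Σ)`. -/
def FlatIn (P : Set α) : Prop :=
  ∀ Sig : Finset (Set α), (∀ E ∈ Sig, G.IsClosedIn P E) →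
    (∀ E ∈ Sig, G.edim E ≠ ⊤) →
    (G.sdim (⋃₀ ↑Sig) : ℤ) ≤ G.flatSum Sig

/-- The α-function of the subpregeometry of `G` induced on `P`:
`α(X) = |X| − d(X) − Σ_{Y ⊊ X closed} α(Y)`. -/
noncomputable def alphaIn (P : Set α) (X : Finset α) : ℤ :=
  (X.card : ℤ) - (G.dim X : ℤ) -
    ∑ Y ∈ (X.powerset.filter fun Y => Y ≠ X ∧ G.IsClosedIn P ↑Y).attach,
      alphaIn P Y.1
termination_by X.card
decreasing_by
  have h := Y.2
  simp only [Finset.mem_filter, Finset.mem_powerset] at h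
  exact Finset.card_lt_card (lt_of_le_of_ne h.1 h.2.1)

end Pregeometry

/-- A hypergraph on the vertex type `α`: a set of nonempty finite edges. -/
structure PHypergraph (α : Type*) where
  edges : Set (Finset α)
  nonempty_edges : ∀ e ∈ edges, e ≠ ∅

namespace PHypergraph

variable {α : Type*} [DecidableEq α] (A : PHypergraph α)

/-- The set of edges contained in a set of vertices. -/
def edgesIn (P : Set α) : Set (Finset α) := {e | e ∈ A.edges ∧ ↑e ⊆ P}

/-- The predimension `δ(P) = |P| − |R[P]|` of a finite set of vertices. -/
noncomputable def delta (P : Finset α) : ℤ :=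
  (P.card : ℤ) - (A.edgesIn ↑P).ncard

/-- The relative predimension `δ(L/P) = |L∖P| − |R[L∪P]∖R[P]|`. -/
noncomputable def deltaRel (L : Finset α) (P : Set α) : ℤ :=
  ((↑L \ P : Set α).ncard : ℤ) -
    ({e | e ∈ A.edges ∧ ↑e ⊆ ↑L ∪ P ∧ ¬ ↑e ⊆ P} : Set (Finset α)).ncard

/-- `P` is self-sufficient in `A`: `δ(X/P) ≥ 0` for every finite `X`, stated so
as to be meaningful even when infinitely many edges are involved. -/
def SelfSuff (P : Set α) : Prop :=
  ∀ X : Finset α, ∀ Es : Finset (Finset α),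
    (∀ e ∈ Es, e ∈ A.edges ∧ ↑e ⊆ ↑X ∪ P ∧ ¬ ↑e ⊆ P) →
    (Es.card : ℤ) ≤ ((↑X \ P : Set α).ncard : ℤ)

/-- The dimension function associated to a hypergraph:
`d(X) = inf {δ(B) : X ⊆ B finite}`. -/
noncomputable def hdim (X : Finset α) : ℤ :=
  sInf {d : ℤ | ∃ B : Finset α, X ⊆ B ∧ d = A.delta B}

/-- The induced subhypergraph on a set `P` of vertices (keeping `α` as the
ambient vertex type). -/
def restrict (P : Set α) : PHypergraph α :=
  ⟨{e | e ∈ A.edges ∧ ↑e ⊆ P}, fun e he => A.nonempty_edges e he.1⟩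

/-- A pregeometry `G` is represented by the hypergraph `A` if the associated
dimension function of `A` is the dimension function of `G`. -/
def Represents (G : Pregeometry α) : Prop :=
  ∀ X : Finset α, (G.dim X : ℤ) = A.hdim X

end PHypergraph
namespace Pregeometry

variable {α : Type*} [DecidableEq α] (G : Pregeometry α)

theorem dim_mono {A B : Finset α} (h : A ⊆ B) : G.dim A ≤ G.dim B := by
  have key : ∀ C : Finset α, G.dim A ≤ G.dim (A ∪ C) := by
    intro C
    induction C using Finset.induction with
    | empty => simp
    | @insert a C _ ih =>
      rw [Finset.union_insert]
      exact le_trans ih (G.dim_le_insert _ a)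
  have := key B
  rwa [Finset.union_eq_right.mpr h] at this

theorem dim_union_eq_superset {A B C : Finset α} (h : G.dim (A ∪ B) = G.dim B)
    (hBC : B ⊆ C) : G.dim (A ∪ C) = G.dim C := by
  have hsub := G.submodular (A ∪ B) C
  rw [Finset.union_assoc, Finset.union_eq_right.mpr hBC, h] at hsub
  have h1 : G.dim B ≤ G.dim ((A ∪ B) ∩ C) :=
    G.dim_mono (Finset.subset_inter (Finset.subset_union_right) hBC)
  have h2 : G.dim C ≤ G.dim (A ∪ C) := G.dim_mono Finset.subset_union_right
  omega

theorem dim_insert_eq_superset {x : α} {A C : Finset α} (hA : G.dim (insert x A) = G.dim A)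
    (hAC : A ⊆ C) : G.dim (insert x C) = G.dim C := by
  have := G.dim_union_eq_superset (A := {x}) (B := A) (C := C)
    (by rwa [← Finset.insert_eq]) hAC
  rwa [← Finset.insert_eq] at this

theorem subset_cl (X : Set α) : X ⊆ G.cl X := by
  intro x hx
  exact ⟨{x}, by simpa using hx, by simp⟩

theorem cl_mono {X Y : Set α} (h : X ⊆ Y) : G.cl X ⊆ G.cl Y := by
  rintro x ⟨A, hA, hd⟩
  exact ⟨A, hA.trans h, hd⟩

theorem exists_union_witness {X : Set α} {A : Finset α} (hA : ↑A ⊆ G.cl X) :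
    ∃ B : Finset α, ↑B ⊆ X ∧ G.dim (A ∪ B) = G.dim B := by
  induction A using Finset.induction with
  | empty => exact ⟨∅, by simp, by simp⟩
  | @insert a A ha ih =>
    have haX : a ∈ G.cl X := hA (by simp)
    obtain ⟨W, hW, hWd⟩ := haX
    obtain ⟨B, hB, hBd⟩ := ih (fun y hy => hA (by simp [hy]))
    refine ⟨W ∪ B, by simp [Set.union_subset hW hB], ?_⟩
    rw [Finset.insert_union]
    have h1 : G.dim (A ∪ (W ∪ B)) = G.dim (W ∪ B) :=
      G.dim_union_eq_superset hBd Finset.subset_union_right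
    have h2 : G.dim (insert a (A ∪ (W ∪ B))) = G.dim (A ∪ (W ∪ B)) :=
      G.dim_insert_eq_superset hWd
        (Finset.subset_union_left.trans Finset.subset_union_right)
    rw [h2, h1]

theorem cl_idem (X : Set α) : G.cl (G.cl X) = G.cl X := by
  apply Set.Subset.antisymm _ (G.subset_cl _)
  rintro x ⟨A, hA, hd⟩
  obtain ⟨B, hB, hBd⟩ := G.exists_union_witness hA
  have h1 : G.dim (insert x (A ∪ B)) = G.dim (A ∪ B) :=
    G.dim_insert_eq_superset hd Finset.subset_union_left
  have h2 : G.dim B ≤ G.dim (insert x B) := G.dim_le_insert _ _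
  have h3 : G.dim (insert x B) ≤ G.dim (insert x (A ∪ B)) :=
    G.dim_mono (Finset.insert_subset_insert _ Finset.subset_union_right)
  exact ⟨B, hB, by omega⟩

theorem le_edim {X : Set α} {A : Finset α} (hA : ↑A ⊆ X) : (G.dim A : ℕ∞) ≤ G.edim X :=
  le_iSup₂_of_le A hA le_rfl

theorem edim_mono {X Y : Set α} (h : X ⊆ Y) : G.edim X ≤ G.edim Y :=
  iSup₂_le fun A hA => G.le_edim (hA.trans h)

theorem edim_attained {X : Set α} (h : G.edim X ≠ ⊤) :
    ∃ A : Finset α, ↑A ⊆ X ∧ (G.dim A : ℕ∞) = G.edim X := by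
  lift G.edim X to ℕ using h with n hn
  by_contra hc
  push_neg at hc
  have hlt : ∀ A : Finset α, ↑A ⊆ X → G.dim A < n := by
    intro A hA
    have h1 : (G.dim A : ℕ∞) ≤ (n : ℕ∞) := hn ▸ G.le_edim hA
    have h1' : G.dim A ≤ n := by exact_mod_cast h1
    have h2' : G.dim A ≠ n := fun he => hc A hA (by exact_mod_cast he)
    omega
  rcases n with _ | n
  · exact absurd (hlt ∅ (by simp)) (by omega)
  · have hle : G.edim X ≤ (n : ℕ∞) := iSup₂_le fun A hA => by
      exact_mod_cast Nat.lt_succ_iff.mp (hlt A hA)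
    rw [← hn] at hle
    exact absurd hle (by exact_mod_cast Nat.not_succ_le_self n)

theorem subset_cl_of_edim_le {C D : Set α} (hCD : C ⊆ D) (hd : G.edim D ≤ G.edim C)
    (hfin : G.edim C ≠ ⊤) : D ⊆ G.cl C := by
  intro x hx
  by_contra hxc
  obtain ⟨A, hA, hAd⟩ := G.edim_attained hfin
  have hne : G.dim (insert x A) ≠ G.dim A := fun he => hxc ⟨A, hA, he⟩
  have h1 : G.dim (insert x A) = G.dim A + 1 := by
    have := G.dim_le_insert A x
    have := G.insert_le_dim A x
    omega
  have h2 : (↑(insert x A) : Set α) ⊆ D := by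
    rw [Finset.coe_insert]
    exact Set.insert_subset hx (hA.trans hCD)
  have h3 := (G.le_edim h2).trans hd
  rw [h1, ← hAd] at h3
  exact absurd (by exact_mod_cast h3 : G.dim A + 1 ≤ G.dim A) (by omega)

theorem isClosedIn_inter {P X₁ X₂ : Set α} (h1 : G.IsClosedIn P X₁)
    (h2 : G.IsClosedIn P X₂) : G.IsClosedIn P (X₁ ∩ X₂) := by
  refine ⟨Set.inter_subset_left.trans h1.1, Set.Subset.antisymm ?_ ?_⟩
  · intro x hx
    refine ⟨?_, ?_⟩
    · rw [← h1.2]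
      exact ⟨G.cl_mono Set.inter_subset_left hx.1, hx.2⟩
    · rw [← h2.2]
      exact ⟨G.cl_mono Set.inter_subset_right hx.1, hx.2⟩
  · intro x hx
    exact ⟨G.subset_cl _ hx, h1.1 hx.1⟩

theorem edim_cl_of_sqStar {H : Set α} (hH : G.SqStar H Set.univ) {X : Set α}
    (hX : G.IsClosedIn H X) : G.edim (G.cl X) = G.edim X := by
  have := hH.2 X X hX hX
  simpa [Set.inter_self, Set.inter_univ] using this.symm

theorem cl_sInter_of_sqStar {H : Set α} (hH : G.SqStar H Set.univ)
    (S : Finset (Set α)) (hS : S.Nonempty)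
    (hcl : ∀ E ∈ S, G.IsClosedIn H E) (hfin : ∀ E ∈ S, G.edim E ≠ ⊤) :
    G.IsClosedIn H (⋂₀ ↑S) ∧ G.edim (⋂₀ ↑S) ≠ ⊤ ∧
      G.cl (⋂₀ ↑S) = ⋂₀ (G.cl '' ↑S) := by
  induction hS using Finset.Nonempty.cons_induction with
  | singleton E => simpa using ⟨hcl E (by simp), hfin E (by simp)⟩
  | cons E S' hE hS' ih =>
    have hclS' : ∀ E' ∈ S', G.IsClosedIn H E' := fun E' h => hcl E' (by simp [h])
    have hfinS' : ∀ E' ∈ S', G.edim E' ≠ ⊤ := fun E' h => hfin E' (by simp [h])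
    obtain ⟨hX₂cl, hX₂fin, hX₂eq⟩ := ih hclS' hfinS'
    have hEcl : G.IsClosedIn H E := hcl E (by simp)
    have hEfin : G.edim E ≠ ⊤ := hfin E (by simp)
    set X₂ : Set α := ⋂₀ ↑S' with hX₂def
    have hcons : (⋂₀ ↑(Finset.cons E S' hE) : Set α) = E ∩ X₂ := by
      simp [Set.sInter_insert, hX₂def]
    have hXcl : G.IsClosedIn H (E ∩ X₂) := G.isClosedIn_inter hEcl hX₂cl
    have hXfin : G.edim (E ∩ X₂) ≠ ⊤ :=
      fun h => hEfin (top_le_iff.mp (h ▸ G.edim_mono Set.inter_subset_left))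
    have hstar1 : G.edim (E ∩ X₂) = G.edim (G.cl E ∩ G.cl X₂) := by
      have := hH.2 E X₂ hEcl hX₂cl
      simpa using this
    have hXeq : G.edim (G.cl (E ∩ X₂)) = G.edim (E ∩ X₂) :=
      G.edim_cl_of_sqStar hH hXcl
    have hsub : G.cl (E ∩ X₂) ⊆ G.cl E ∩ G.cl X₂ :=
      Set.subset_inter (G.cl_mono Set.inter_subset_left)
        (G.cl_mono Set.inter_subset_right)
    have hfin' : G.edim (G.cl (E ∩ X₂)) ≠ ⊤ := hXeq ▸ hXfin
    have hDsub : G.cl E ∩ G.cl X₂ ⊆ G.cl (G.cl (E ∩ X₂)) :=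
      G.subset_cl_of_edim_le hsub (le_of_eq (by rw [hXeq, hstar1])) hfin'
    rw [G.cl_idem] at hDsub
    have hclX : G.cl (E ∩ X₂) = G.cl E ∩ G.cl X₂ := Set.Subset.antisymm hsub hDsub
    refine ⟨hcons ▸ hXcl, hcons ▸ hXfin, ?_⟩
    rw [hcons, hclX, hX₂eq]
    simp [Set.sInter_insert, Set.image_insert_eq]

theorem edim_sInter_cl_of_sqStar {H : Set α} (hH : G.SqStar H Set.univ)
    (S : Finset (Set α)) (hS : S.Nonempty)
    (hcl : ∀ E ∈ S, G.IsClosedIn H E) (hfin : ∀ E ∈ S, G.edim E ≠ ⊤) :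
    G.edim (⋂₀ ↑S) = G.edim (⋂₀ (G.cl '' ↑S)) := by
  obtain ⟨h1, _, h3⟩ := G.cl_sInter_of_sqStar hH S hS hcl hfin
  rw [← h3, G.edim_cl_of_sqStar hH h1]

end Pregeometry

/-- if `F ⊑ G` and `F ⊆ H ⊑* G`, then `F ⊑ H`. -/
theorem sq_of_intermediate_sqStar {α : Type*} [DecidableEq α] (G : Pregeometry α)
    (F H : Set α) (hF : G.Sq F Set.univ) (hFH : F ⊆ H)
    (hH : G.SqStar H Set.univ) : G.Sq F H := by
  refine ⟨hFH, fun Sig hcl hfin => ?_⟩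
  classical
  set Sig' : Finset (Set α) := Sig.image G.cl with hSig'
  -- closures are closed in the whole geometry and finite dimensional
  have hA : ∀ E ∈ Sig', G.IsClosedIn Set.univ E := by
    intro E hE
    obtain ⟨E₀, hE₀, rfl⟩ := Finset.mem_image.mp hE
    exact ⟨Set.subset_univ _, by rw [G.cl_idem, Set.inter_univ]⟩
  have hB : ∀ E ∈ Sig', G.edim E ≠ ⊤ := by
    intro E hE
    obtain ⟨E₀, hE₀, rfl⟩ := Finset.mem_image.mp hE
    rw [G.edim_cl_of_sqStar hH (hcl E₀ hE₀)]
    exact hfin E₀ hE₀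
  have hle := hF.2 Sig' hA hB
  -- traces on F coincide
  have himg : Sig'.image (· ∩ F) = Sig.image (· ∩ F) := by
    rw [hSig', Finset.image_image]
    refine Finset.image_congr fun E hE => ?_
    show G.cl E ∩ F = E ∩ F
    calc G.cl E ∩ F = (G.cl E ∩ H) ∩ F := by
          rw [Set.inter_assoc, Set.inter_eq_right.mpr hFH]
      _ = E ∩ F := by rw [(hcl E hE).2]
  rw [himg] at hle
  -- flatSum Sig = flatSum Sig'
  have hD : G.flatSum Sig = G.flatSum Sig' := by
    unfold Pregeometry.flatSum
    refine Finset.sum_nbij' (fun S => S.image G.cl) (fun T => T.image (· ∩ H))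
      ?_ ?_ ?_ ?_ ?_
    · intro S hS
      simp only [Finset.mem_filter, Finset.mem_powerset] at hS ⊢
      exact ⟨Finset.image_subset_image hS.1, by
        simpa [Finset.image_eq_empty] using hS.2⟩
    · intro T hT
      simp only [Finset.mem_filter, Finset.mem_powerset] at hT ⊢
      constructor
      · intro x hx
        obtain ⟨y, hy, rfl⟩ := Finset.mem_image.mp hx
        obtain ⟨E₀, hE₀, rfl⟩ := Finset.mem_image.mp (hT.1 hy)
        rwa [(hcl E₀ hE₀).2]
      · simpa [Finset.image_eq_empty] using hT.2
    · intro S hS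
      simp only [Finset.mem_filter, Finset.mem_powerset] at hS
      show (S.image G.cl).image (fun E => E ∩ H) = S
      rw [Finset.image_image]
      calc S.image (fun E => G.cl E ∩ H) = S.image id :=
            Finset.image_congr fun E hE => (hcl E (hS.1 hE)).2
        _ = S := Finset.image_id
    · intro T hT
      simp only [Finset.mem_filter, Finset.mem_powerset] at hT
      show (T.image (fun E => E ∩ H)).image G.cl = T
      rw [Finset.image_image]
      calc T.image (fun E => G.cl (E ∩ H)) = T.image id := by
            refine Finset.image_congr fun E hE => ?_
            obtain ⟨E₀, hE₀, rfl⟩ := Finset.mem_image.mp (hT.1 hE)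
            show G.cl (G.cl E₀ ∩ H) = G.cl E₀
            rw [(hcl E₀ hE₀).2]
        _ = T := Finset.image_id
    · intro S hS
      simp only [Finset.mem_filter, Finset.mem_powerset] at hS
      have hinj : Set.InjOn G.cl ↑S := by
        intro E₁ h₁ E₂ h₂ he
        rw [← (hcl E₁ (hS.1 h₁)).2, ← (hcl E₂ (hS.1 h₂)).2, he]
      have hcard : (S.image G.cl).card = S.card := Finset.card_image_of_injOn hinj
      have hne : S.Nonempty := Finset.nonempty_iff_ne_empty.mpr hS.2
      have hdim : G.edim (⋂₀ ↑S) = G.edim (⋂₀ ↑(S.image G.cl)) := by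
        rw [Finset.coe_image]
        exact G.edim_sInter_cl_of_sqStar hH S hne
          (fun E hE => hcl E (hS.1 hE)) (fun E hE => hfin E (hS.1 hE))
      rw [hcard]
      unfold Pregeometry.sdim
      rw [hdim]
  rw [hD]
  exact hle
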